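/- Let S be a commutative semiring and A an S-semialgebra whose underlying S-semimodule is projective and uniformly finitely presented (there exist n ∈ ℕ and a surjective k-uniform S-linear map g : S^n → A whose kernel submodule is finitely generated). Then the dual A* = Hom_S(A,S) carries an S-semicoalgebra structure (A*, Δ*, ε*) where: (i) Δ* : A* → A* ⊗_S A* is the unique S-linear map such that for all f ∈ A* and a, b ∈ A, writing Δ*(f) = Σ_i f_i ⊗ g_i, one has f(a·b) = Σ_i f_i(a)·g_i(b); (ii) ε* : A* → S is given by ε*(f) = f(1_A); and Δ* is coassociative with counit ε*. -/

import Mathlib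

set_option synthInstance.maxHeartbeats 1000000
set_option maxHeartbeats 1000000


/-!
STATEMENT 18: Let `S` be a commutative semiring and `A` an `S`-semialgebra
whose underlying `S`-semimodule is projective and uniformly finitely
presented.  Then the dual `A* = Hom_S(A,S)` carries an `S`-semicoalgebra
structure `(A*, Δ*, ε*)`: `Δ*` is the unique `S`-linear map such that
whenever `Δ* f = ∑ fᵢ ⊗ gᵢ` one has `f (a·b) = ∑ fᵢ a · gᵢ b`; moreover `Δ*`
is coassociative with counit `ε* : f ↦ f 1`.
-/

open TensorProduct


variable (S : Type*) [CommSemiring S] (A : Type*) [Semiring A] [Algebra S A]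

/-- Evaluation of an element of `A* ⊗[S] A*` at a pair `(a, b)`:
`∑ fᵢ ⊗ gᵢ ↦ ∑ fᵢ a · gᵢ b`. -/
noncomputable def dualEvalPair (a b : A) :
    Module.Dual S A ⊗[S] Module.Dual S A →ₗ[S] S :=
  TensorProduct.lift <| LinearMap.mk₂ S (fun p q => p a * q b)
    (fun p p' q => by simp [add_mul])
    (fun s p q => by simp [smul_eq_mul, mul_assoc])
    (fun p q q' => by simp [mul_add])
    (fun s p q => by simp [smul_eq_mul, mul_left_comm])

/-- The counit `ε* : A* → S`, `f ↦ f 1`. -/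
noncomputable def dualCounit : Module.Dual S A →ₗ[S] S where
  toFun f := f 1
  map_add' f g := by simp
  map_smul' s f := by simp

section Aux
variable {S : Type*} [CommSemiring S]

/-- Contraction of the first (dual) factor of a tensor at `m`. -/
noncomputable def contrD {M P : Type*} [AddCommMonoid M] [Module S M]
    [AddCommMonoid P] [Module S P] (m : M) :
    Module.Dual S M ⊗[S] P →ₗ[S] P :=
  TensorProduct.lift <| LinearMap.mk₂ S (fun f p => f m • p)
    (fun f f' p => by simp [add_smul])
    (fun s f p => by
      show ((s • f) m) • p = s • (f m • p)
      rw [LinearMap.smul_apply, smul_eq_mul, mul_smul])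
    (fun f p p' => by simp)
    (fun s f p => by
      show f m • (s • p) = s • (f m • p)
      rw [smul_comm])

@[simp] lemma contrD_tmul {M P : Type*} [AddCommMonoid M] [Module S M]
    [AddCommMonoid P] [Module S P] (m : M) (f : Module.Dual S M) (p : P) :
    contrD m (f ⊗ₜ[S] p) = f m • p := rfl

lemma contrD_rTensor {M N P : Type*} [AddCommMonoid M] [Module S M]
    [AddCommMonoid N] [Module S N] [AddCommMonoid P] [Module S P]
    (g : M →ₗ[S] N) (x : M) (T : Module.Dual S N ⊗[S] P) :
    contrD x (LinearMap.rTensor P g.dualMap T) = contrD (g x) T := by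
  induction T using TensorProduct.induction_on with
  | zero => simp
  | tmul f p => simp
  | add u v hu hv => simp [hu, hv]

lemma pi_dual_sum {n : ℕ} (f : Module.Dual S (Fin n → S)) :
    ∑ i, f (Pi.single i 1) • (LinearMap.proj i : (Fin n → S) →ₗ[S] S) = f := by
  apply LinearMap.ext; intro x
  rw [LinearMap.pi_apply_eq_sum_univ f x]
  simp only [LinearMap.sum_apply, LinearMap.smul_apply, LinearMap.proj_apply, smul_eq_mul,
    mul_comm]
  refine Finset.sum_congr rfl fun i _ => ?_
  have : (Pi.single i 1 : Fin n → S) = fun j => if i = j then 1 else 0 := by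
    funext j
    simp [Pi.single_apply, eq_comm]
  rw [this]

lemma free_recover {n : ℕ} {P : Type*} [AddCommMonoid P] [Module S P]
    (U : Module.Dual S (Fin n → S) ⊗[S] P) :
    U = ∑ i, (LinearMap.proj i : (Fin n → S) →ₗ[S] S) ⊗ₜ[S] contrD (Pi.single i 1) U := by
  induction U using TensorProduct.induction_on with
  | zero => simp
  | tmul f p =>
      simp only [contrD_tmul]
      calc f ⊗ₜ[S] p = (∑ i, f (Pi.single i 1) • (LinearMap.proj i : (Fin n → S) →ₗ[S] S)) ⊗ₜ[S] p := by
            rw [pi_dual_sum]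
        _ = ∑ i, (LinearMap.proj i : (Fin n → S) →ₗ[S] S) ⊗ₜ[S] (f (Pi.single i 1) • p) := by
            rw [TensorProduct.sum_tmul]
            exact Finset.sum_congr rfl fun i _ => by rw [TensorProduct.smul_tmul]
  | add u v hu hv =>
      simp only [map_add, TensorProduct.tmul_add]
      rw [Finset.sum_add_distrib, ← hu, ← hv]

end Aux

/-- Key extensionality: elements of `A* ⊗ P` are determined by contractions, when
`A` is projective and finitely generated. -/
lemma contrD_ext {P : Type*} [AddCommMonoid P] [Module S P]
    (hproj : Module.Projective S A) {n : ℕ} (g : (Fin n → S) →ₗ[S] A)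
    (hsurj : Function.Surjective g)
    {T T' : Module.Dual S A ⊗[S] P}
    (h : ∀ a : A, contrD a T = contrD a T') : T = T' := by
  haveI := hproj
  obtain ⟨s, hs⟩ := Module.projective_lifting_property g LinearMap.id hsurj
  have hgs : ∀ a : A, g (s a) = a := fun a => LinearMap.congr_fun hs a
  have hsd : s.dualMap.comp g.dualMap = LinearMap.id := by
    apply LinearMap.ext; intro φ
    apply LinearMap.ext; intro a
    simp [hgs]
  have key : ∀ U : Module.Dual S A ⊗[S] P,
      U = LinearMap.rTensor P s.dualMap (LinearMap.rTensor P g.dualMap U) := by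
    intro U
    rw [← LinearMap.comp_apply, ← LinearMap.rTensor_comp, hsd, LinearMap.rTensor_id,
      LinearMap.id_apply]
  rw [key T, key T']
  congr 1
  rw [free_recover (LinearMap.rTensor P g.dualMap T),
    free_recover (LinearMap.rTensor P g.dualMap T')]
  refine Finset.sum_congr rfl fun i _ => ?_
  rw [contrD_rTensor, contrD_rTensor, h]

lemma dualEvalPair_tmul (a b : A) (f q : Module.Dual S A) :
    dualEvalPair S A a b (f ⊗ₜ[S] q) = f a * q b := rfl

lemma contrD_apply_eq (a b : A) (T : Module.Dual S A ⊗[S] Module.Dual S A) :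
    (contrD a T) b = dualEvalPair S A a b T := by
  induction T using TensorProduct.induction_on with
  | zero => simp
  | tmul f q => simp [dualEvalPair_tmul, smul_eq_mul]
  | add u v hu hv => simp [hu, hv]

/-- Explicit comultiplication built from a retraction of a finite free module. -/
noncomputable def deltaMap {n : ℕ} (g : (Fin n → S) →ₗ[S] A) (s : A →ₗ[S] (Fin n → S)) :
    Module.Dual S A →ₗ[S] Module.Dual S A ⊗[S] Module.Dual S A :=
  ∑ i, ∑ j,
    (LinearMap.applyₗ (g (fun k => if i = k then 1 else 0) * g (fun k => if j = k then 1 else 0))).smulRight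
      (((LinearMap.proj i : (Fin n → S) →ₗ[S] S).comp s) ⊗ₜ[S]
        ((LinearMap.proj j : (Fin n → S) →ₗ[S] S).comp s))

lemma delta_prop {n : ℕ} (g : (Fin n → S) →ₗ[S] A) (s : A →ₗ[S] (Fin n → S))
    (hs : g.comp s = LinearMap.id) (a b : A) (f : Module.Dual S A) :
    dualEvalPair S A a b (deltaMap S A g s f) = f (a * b) := by
  have hgs : ∀ x : A, g (s x) = x := fun x => LinearMap.congr_fun hs x
  have ha : ∀ x : A, x = ∑ i, s x i • g (fun k => if i = k then 1 else 0) := by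
    intro x
    conv_lhs => rw [← hgs x, LinearMap.pi_apply_eq_sum_univ g (s x)]
  have hrhs : f (a * b) = ∑ i, ∑ j,
      f (g (fun k => if i = k then 1 else 0) * g (fun k => if j = k then 1 else 0)) *
        (s a i * s b j) := by
    conv_lhs => rw [ha a, ha b]
    rw [Finset.sum_mul_sum, map_sum]
    refine Finset.sum_congr rfl fun i _ => ?_
    rw [map_sum]
    refine Finset.sum_congr rfl fun j _ => ?_
    rw [smul_mul_assoc, mul_smul_comm, map_smul, map_smul, smul_eq_mul, smul_eq_mul]
    ring
  rw [hrhs]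
  simp only [deltaMap, LinearMap.sum_apply, map_sum, LinearMap.smulRight_apply,
    LinearMap.applyₗ_apply_apply, map_smul, dualEvalPair_tmul, LinearMap.comp_apply,
    LinearMap.proj_apply, smul_eq_mul]

section Coalg
variable {S A}
variable (Δ : Module.Dual S A →ₗ[S] Module.Dual S A ⊗[S] Module.Dual S A)

lemma contrD_lTensor (a : A) (W : Module.Dual S A ⊗[S] Module.Dual S A) :
    contrD a (LinearMap.lTensor (Module.Dual S A) Δ W) = Δ (contrD a W) := by
  induction W using TensorProduct.induction_on with
  | zero => simp
  | tmul f q => simp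
  | add u v hu hv => simp [hu, hv]

lemma contrD_assoc_aux (a b : A) (V : Module.Dual S A ⊗[S] Module.Dual S A)
    (q : Module.Dual S A) :
    contrD b (contrD a ((TensorProduct.assoc S _ _ _) (V ⊗ₜ[S] q))) =
      dualEvalPair S A a b V • q := by
  induction V using TensorProduct.induction_on with
  | zero => simp
  | tmul u v => simp [dualEvalPair_tmul, smul_smul]
  | add u v hu hv => simp [add_tmul, hu, hv, add_smul]

lemma contrD_assoc_rTensor
    (hΔ : ∀ (a b : A) (f : Module.Dual S A), dualEvalPair S A a b (Δ f) = f (a * b))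
    (a b : A) (W : Module.Dual S A ⊗[S] Module.Dual S A) :
    contrD b (contrD a ((TensorProduct.assoc S _ _ _)
        (LinearMap.rTensor (Module.Dual S A) Δ W))) = contrD (a * b) W := by
  induction W using TensorProduct.induction_on with
  | zero => simp
  | tmul p q =>
      rw [LinearMap.rTensor_tmul, contrD_assoc_aux, hΔ, contrD_tmul]
  | add u v hu hv => simp [hu, hv]

lemma lid_rTensor_counit (W : Module.Dual S A ⊗[S] Module.Dual S A) :
    (TensorProduct.lid S (Module.Dual S A))
        (LinearMap.rTensor (Module.Dual S A) (dualCounit S A) W) = contrD (1 : A) W := by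
  induction W using TensorProduct.induction_on with
  | zero => simp
  | tmul f q => simp [dualCounit]
  | add u v hu hv => simp [hu, hv]

lemma rid_lTensor_counit (W : Module.Dual S A ⊗[S] Module.Dual S A) (a : A) :
    ((TensorProduct.rid S (Module.Dual S A))
        (LinearMap.lTensor (Module.Dual S A) (dualCounit S A) W)) a =
      dualEvalPair S A a 1 W := by
  induction W using TensorProduct.induction_on with
  | zero => simp
  | tmul f q => simp [dualCounit, dualEvalPair_tmul, mul_comm]
  | add u v hu hv => simp [hu, hv]

end Coalg

theorem dual_is_semicoalgebra_of_projective_of_ufp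
    -- `A` is projective as an `S`-semimodule
    (hproj : Module.Projective S A)
    -- `A` is uniformly finitely presented as an `S`-semimodule
    (hufp : ∃ (n : ℕ) (g : (Fin n → S) →ₗ[S] A),
      Function.Surjective g ∧
      (∀ x y : Fin n → S, g x = g y →
        ∃ k k' : Fin n → S, g k = 0 ∧ g k' = 0 ∧ x + k = y + k') ∧
      (LinearMap.ker g).FG) :
    -- (i) there is a unique `Δ* : A* → A* ⊗ A*` with
    --     `f (a·b) = ∑ fᵢ a · gᵢ b` whenever `Δ* f = ∑ fᵢ ⊗ gᵢ` …
    (∃! Δ : Module.Dual S A →ₗ[S] Module.Dual S A ⊗[S] Module.Dual S A,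
      ∀ (a b : A) (f : Module.Dual S A),
        dualEvalPair S A a b (Δ f) = f (a * b)) ∧
    -- … and (ii) any such `Δ*` is coassociative with counit `ε* : f ↦ f 1`
    (∀ Δ : Module.Dual S A →ₗ[S] Module.Dual S A ⊗[S] Module.Dual S A,
      (∀ (a b : A) (f : Module.Dual S A),
        dualEvalPair S A a b (Δ f) = f (a * b)) →
      (∀ f, (TensorProduct.assoc S _ _ _)
          (LinearMap.rTensor (Module.Dual S A) Δ (Δ f)) =
        LinearMap.lTensor (Module.Dual S A) Δ (Δ f)) ∧
      (∀ f, (TensorProduct.lid S (Module.Dual S A))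
          (LinearMap.rTensor (Module.Dual S A) (dualCounit S A) (Δ f)) = f) ∧
      (∀ f, (TensorProduct.rid S (Module.Dual S A))
          (LinearMap.lTensor (Module.Dual S A) (dualCounit S A) (Δ f)) = f)) := by
  obtain ⟨n, g, hsurj, -, -⟩ := hufp
  haveI := hproj
  obtain ⟨s, hs⟩ := Module.projective_lifting_property g LinearMap.id hsurj
  constructor
  · refine ⟨deltaMap S A g s, delta_prop S A g s hs, ?_⟩
    intro Δ' hΔ'
    apply LinearMap.ext; intro f
    refine contrD_ext S A hproj g hsurj fun a => ?_
    apply LinearMap.ext; intro b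
    rw [contrD_apply_eq, contrD_apply_eq, hΔ', delta_prop S A g s hs]
  · intro Δ hΔ
    refine ⟨?_, ?_, ?_⟩
    · intro f
      refine contrD_ext S A hproj g hsurj fun a => ?_
      refine contrD_ext S A hproj g hsurj fun b => ?_
      apply LinearMap.ext; intro c
      rw [contrD_assoc_rTensor Δ hΔ, contrD_lTensor, contrD_apply_eq, contrD_apply_eq,
        hΔ, hΔ, contrD_apply_eq, hΔ, mul_assoc]
    · intro f
      rw [lid_rTensor_counit]
      apply LinearMap.ext; intro a
      rw [contrD_apply_eq, hΔ, one_mul]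
    · intro f
      apply LinearMap.ext; intro a
      rw [rid_lTensor_counit, hΔ, mul_one]
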